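/- Let 1 ≤ r' ≤ r ≤ min(s, K) with s ≤ N. Then Σ_{s,r} is dense in Σ_{s,r'}: for every X ∈ Σ_{s,r'} ⊆ ℝ^{N×K} and every ε > 0, there exists X' ∈ Σ_{s,r} with ‖X − X'‖_F < ε, where ‖·‖_F is the Frobenius norm. -/

import Mathlib

open Matrix

noncomputable section

/-- The set of indices of nonzero rows of a matrix. -/
def rowSupport {N K : ℕ} (X : Matrix (Fin N) (Fin K) ℝ) : Set (Fin N) := {i | X i ≠ 0}

/-- `X` is `s`-row sparse: at most `s` of its rows are nonzero. -/
def RowSparse {N K : ℕ} (s : ℕ) (X : Matrix (Fin N) (Fin K) ℝ) : Prop :=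
  (rowSupport X).ncard ≤ s

/-- `‖X‖₀`: the number of nonzero rows of `X`. -/
def rowL0 {N K : ℕ} (X : Matrix (Fin N) (Fin K) ℝ) : ℕ := (rowSupport X).ncard

/-- `Σ_{s,r}`: matrices in `ℝ^{N×K}` that are `s`-row sparse and have rank at least `r`. -/
def SigmaSR {N K : ℕ} (s r : ℕ) : Set (Matrix (Fin N) (Fin K) ℝ) :=
  {X | RowSparse s X ∧ r ≤ X.rank}

/-- The Frobenius norm of a matrix. -/
def frobNorm {N K : ℕ} (X : Matrix (Fin N) (Fin K) ℝ) : ℝ :=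
  Real.sqrt (∑ i, ∑ j, (X i j) ^ 2)

lemma frobNorm_nonneg {N K : ℕ} (X : Matrix (Fin N) (Fin K) ℝ) : 0 ≤ frobNorm X :=
  Real.sqrt_nonneg _

lemma frobNorm_smul {N K : ℕ} (c : ℝ) (X : Matrix (Fin N) (Fin K) ℝ) :
    frobNorm (c • X) = |c| * frobNorm X := by
  unfold frobNorm
  have : ∑ i, ∑ j, (((c • X) : Matrix (Fin N) (Fin K) ℝ) i j) ^ 2
      = c ^ 2 * ∑ i, ∑ j, (X i j) ^ 2 := by
    simp [Matrix.smul_apply, mul_pow, Finset.mul_sum]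
  rw [this, Real.sqrt_mul (sq_nonneg c), Real.sqrt_sq_eq_abs]

/-- The rank of a (row,column)-submatrix is at most the rank of the matrix. -/
lemma rank_submatrix_le' {N K r : ℕ} (M : Matrix (Fin N) (Fin K) ℝ)
    (f : Fin r → Fin N) (g : Fin r → Fin K) :
    (M.submatrix f g).rank ≤ M.rank := by
  classical
  set P : Matrix (Fin r) (Fin N) ℝ := Matrix.of fun i a => if f i = a then (1 : ℝ) else 0
  set Q : Matrix (Fin K) (Fin r) ℝ := Matrix.of fun b j => if b = g j then (1 : ℝ) else 0
  have hPQ : M.submatrix f g = P * M * Q := by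
    ext i j
    simp [P, Q, Matrix.mul_apply, ite_mul, mul_ite, Finset.sum_ite_eq, Finset.sum_ite_eq']
  rw [hPQ]
  calc (P * M * Q).rank ≤ (P * M).rank := Matrix.rank_mul_le_left _ _
    _ ≤ M.rank := Matrix.rank_mul_le_right _ _

/-- `Σ_{s,r}` is dense in `Σ_{s,r'}` for `r' ≤ r`. -/
theorem statement_11 {N K : ℕ} (s r r' : ℕ)
    (hr'1 : 1 ≤ r') (hr'r : r' ≤ r) (hrs : r ≤ s) (hrK : r ≤ K) (hsN : s ≤ N)
    (X : Matrix (Fin N) (Fin K) ℝ) (hX : X ∈ SigmaSR (N := N) (K := K) s r')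
    (ε : ℝ) (hε : 0 < ε) :
    ∃ X' ∈ SigmaSR (N := N) (K := K) s r, frobNorm (X - X') < ε := by
  classical
  obtain ⟨hXs, -⟩ := hX
  -- a set `S` of `s` rows containing the row support of `X`
  have hT : (rowSupport X).toFinset.card ≤ s := by
    rwa [← Set.ncard_eq_toFinset_card']
  obtain ⟨S, hTS, -, hScard⟩ :=
    Finset.exists_subsuperset_card_eq (Finset.subset_univ (rowSupport X).toFinset) hT
      (by simpa using hsN)
  -- injections selecting `r` rows inside `S` and `r` columns
  set f : Fin r → Fin N := fun i => (S.orderIsoOfFin hScard ⟨(i : ℕ), lt_of_lt_of_le i.2 hrs⟩ : Fin N)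
  have hf : Function.Injective f := by
    intro i j hij
    have := (S.orderIsoOfFin hScard).injective (Subtype.val_injective hij)
    exact Fin.ext (by simpa using congrArg Fin.val this)
  have hfS : ∀ i, f i ∈ S := fun i => (S.orderIsoOfFin hScard _).2
  set g : Fin r → Fin K := Fin.castLE hrK
  have hg : Function.Injective g := Fin.castLE_injective hrK
  -- a rank-`r` matrix supported on the rows `f i`
  set Z : Matrix (Fin N) (Fin K) ℝ :=
    Matrix.of fun a b => ∑ i : Fin r, (if a = f i then (1 : ℝ) else 0) * (if b = g i then 1 else 0)
  have hZsub : Z.submatrix f g = (1 : Matrix (Fin r) (Fin r) ℝ) := by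
    ext i j
    simp only [Matrix.submatrix_apply, Z, Matrix.of_apply, Matrix.one_apply, hf.eq_iff, hg.eq_iff]
    simp [ite_mul, Finset.sum_ite_eq', eq_comm]
  have hZrow : ∀ a, a ∉ S → Z a = 0 := by
    intro a ha
    funext b
    have : ∀ i : Fin r, a ≠ f i := fun i h => ha (h ▸ hfS i)
    simp [Z, this]
  have hXrow : ∀ a, a ∉ S → X a = 0 := by
    intro a ha
    by_contra h
    exact ha (hTS (Set.mem_toFinset.mpr h))
  -- the family `A t = X + t • (Z - X)`
  set A : ℝ → Matrix (Fin N) (Fin K) ℝ := fun t => X + t • (Z - X)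
  -- determinant of the `(f,g)` submatrix as a polynomial in `t`
  set q : Matrix (Fin r) (Fin r) (Polynomial ℝ) :=
    Matrix.of fun i j => Polynomial.C (X (f i) (g j)) +
      Polynomial.X * Polynomial.C (Z (f i) (g j) - X (f i) (g j))
  set p : Polynomial ℝ := q.det
  have hmap : ∀ t : ℝ, q.map (Polynomial.evalRingHom t) = (A t).submatrix f g := by
    intro t
    ext i j
    simp [q, A, Matrix.map_apply, Matrix.submatrix_apply]
  have heval : ∀ t : ℝ, p.eval t = ((A t).submatrix f g).det := by
    intro t
    have := (Polynomial.evalRingHom t).map_det q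
    rw [RingHom.mapMatrix_apply, hmap t] at this
    simpa using this
  have hp1 : p.eval 1 = 1 := by
    have hA1 : (A 1).submatrix f g = (1 : Matrix (Fin r) (Fin r) ℝ) := by
      have : A 1 = Z := by simp [A]
      rw [this, hZsub]
    rw [heval 1, hA1, Matrix.det_one]
  have hp : p ≠ 0 := fun h => by simp [h] at hp1
  -- choose a small `t` avoiding the roots of `p`
  set δ : ℝ := ε / (frobNorm (X - Z) + 1)
  have hden : 0 < frobNorm (X - Z) + 1 := by linarith [frobNorm_nonneg (X - Z)]
  have hδ : 0 < δ := div_pos hε hden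
  have hinf : (Set.Ioo (0 : ℝ) δ).Infinite := Set.Ioo_infinite hδ
  obtain ⟨t, ht⟩ := (hinf.diff (Polynomial.finite_setOf_isRoot hp)).nonempty
  obtain ⟨⟨ht0, htδ⟩, htroot⟩ := ht
  have hdet : ((A t).submatrix f g).det ≠ 0 := by
    rw [← heval t]
    exact fun h => htroot h
  refine ⟨A t, ⟨?_, ?_⟩, ?_⟩
  · -- row sparsity
    have hsub : rowSupport (A t) ⊆ (S : Set (Fin N)) := by
      intro a ha
      by_contra haS
      apply ha
      have hX0 := hXrow a haS
      have hZ0 := hZrow a haS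
      funext b
      have hx : X a b = 0 := congrFun hX0 b
      have hz : Z a b = 0 := congrFun hZ0 b
      simp [A, hx, hz]
    calc (rowSupport (A t)).ncard ≤ (S : Set (Fin N)).ncard :=
          Set.ncard_le_ncard hsub (S.finite_toSet)
      _ = s := by rw [Set.ncard_coe_finset, hScard]
  · -- rank
    have hunit : IsUnit ((A t).submatrix f g) :=
      (Matrix.isUnit_iff_isUnit_det _).mpr (isUnit_iff_ne_zero.mpr hdet)
    have hrank : ((A t).submatrix f g).rank = r := by
      rw [Matrix.rank_of_isUnit _ hunit, Fintype.card_fin]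
    calc r = ((A t).submatrix f g).rank := hrank.symm
      _ ≤ (A t).rank := rank_submatrix_le' _ _ _
  · -- distance
    have hXA : X - A t = t • (X - Z) := by
      unfold A
      ext a b
      simp [Matrix.sub_apply, Matrix.smul_apply]
      ring
    rw [hXA, frobNorm_smul, abs_of_pos ht0]
    have h1 : t * frobNorm (X - Z) < δ * (frobNorm (X - Z) + 1) := by
      have := frobNorm_nonneg (X - Z)
      nlinarith
    have h2 : δ * (frobNorm (X - Z) + 1) = ε := div_mul_cancel₀ ε hden.ne'
    linarith
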